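/- Let f : ℝⁿ → ℝ ∪ {+∞} be finite and locally lsc at x̄, and X ⊆ dom f closed and convex with x̄ ∈ X. If f is locally Lipschitz continuous at x̄ relative to X, then for all x ∈ X sufficiently close to x̄, the horizon subdifferential of f + δ_X at x is contained in the normal cone to X at x: ∂^∞(f + δ_X)(x) ⊆ N_X(x). -/

import Mathlib

open Filter Metric Set Classical
open scoped Topology RealInnerProductSpace

noncomputable section

abbrev Eu (n : ℕ) := EuclideanSpace ℝ (Fin n)

section GeneralDefs

variable {E F : Type*} [NormedAddCommGroup E] [NormedSpace ℝ E]
  [NormedAddCommGroup F] [NormedSpace ℝ F]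

/-- `v` is a proximal normal vector to `A` at `a`: for some `t > 0`,
`a` is a nearest point of `A` to `a + t • v`. -/
def proxNormal (A : Set E) (a : E) : Set E :=
  {v | ∃ t : ℝ, 0 < t ∧ ‖t • v‖ = Metric.infDist (a + t • v) A}

/-- the set of nearest points of `K` to `x` (metric projection). -/
def projSet (K : Set E) (x : E) : Set E :=
  {y | y ∈ K ∧ ∀ z ∈ K, ‖x - y‖ ≤ ‖x - z‖}

/-- the contingent (tangent) cone to `X` at `x`. -/
def tangCone (X : Set E) (x : E) : Set E :=
  {w | ∃ (t : ℕ → ℝ) (v : ℕ → E), (∀ k, 0 < t k) ∧ Tendsto t atTop (𝓝 0) ∧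
    Tendsto v atTop (𝓝 w) ∧ ∀ k, x + t k • v k ∈ X}

/-- `A` is locally closed at `a`. -/
def LocallyClosedAt (A : Set E) (a : E) : Prop := ∃ U ∈ 𝓝 a, IsClosed (A ∩ U)

/-- the graph of the restriction `S|_X`. -/
def svGraph (S : E → Set F) (X : Set E) : Set (E × F) := {p | p.1 ∈ X ∧ p.2 ∈ S p.1}

/-- the Lipschitz-like property of `S` relative to `X` at `x₀` for `u₀` with constant `κ`. -/
def LipschitzLikeRel (S : E → Set F) (X : Set E) (x₀ : E) (u₀ : F) (κ : ℝ) : Prop :=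
  LocallyClosedAt (svGraph S univ) (x₀, u₀) ∧
  ∃ V ∈ 𝓝 x₀, ∃ W ∈ 𝓝 u₀, ∀ x ∈ X ∩ V, ∀ x' ∈ X ∩ V, ∀ u ∈ S x' ∩ W,
    ∃ u'' ∈ S x, ‖u - u''‖ ≤ κ * ‖x' - x‖

/-- the graphical modulus of `S` relative to `X` at `x₀` for `u₀` (as an extended real,
the infimum of all Lipschitz-like constants). -/
def gmod (S : E → Set F) (X : Set E) (x₀ : E) (u₀ : F) : EReal :=
  sInf {c : EReal | ∃ κ : ℝ, 0 ≤ κ ∧ c = (κ : EReal) ∧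
    ∃ V ∈ 𝓝 x₀, ∃ W ∈ 𝓝 u₀, ∀ x ∈ X ∩ V, ∀ x' ∈ X ∩ V, ∀ u ∈ S x' ∩ W,
      ∃ u'' ∈ S x, ‖u - u''‖ ≤ κ * ‖x' - x‖}

/-- the horizon cone of `A`. -/
def horizonCone (A : Set E) : Set E :=
  {w | ∃ (a : ℕ → E) (l : ℕ → ℝ), (∀ k, a k ∈ A) ∧ (∀ k, 0 < l k) ∧
    Tendsto l atTop (𝓝 0) ∧ Tendsto (fun k => l k • a k) atTop (𝓝 w)}

/-- extended-real absolute difference `|a - b|`. -/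
def eabsdiff (a b : EReal) : EReal := max (a - b) (b - a)

/-- `f` is locally Lipschitz continuous at `x₀` relative to `X`. -/
def RelLipschitzAt (f : E → EReal) (X : Set E) (x₀ : E) : Prop :=
  ∃ κ : ℝ, 0 ≤ κ ∧ ∃ V ∈ 𝓝 x₀, ∀ x ∈ X ∩ V, ∀ y ∈ X ∩ V,
    eabsdiff (f x) (f y) ≤ ((κ * ‖x - y‖ : ℝ) : EReal)

/-- the Lipschitz modulus of `f` at `x₀` relative to `X` (as an extended real). -/
def relLipMod (f : E → EReal) (X : Set E) (x₀ : E) : EReal :=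
  sInf {c : EReal | ∃ κ : ℝ, 0 ≤ κ ∧ c = (κ : EReal) ∧ ∃ V ∈ 𝓝 x₀,
    ∀ x ∈ X ∩ V, ∀ y ∈ X ∩ V, eabsdiff (f x) (f y) ≤ ((κ * ‖x - y‖ : ℝ) : EReal)}

end GeneralDefs

section InnerDefs

variable {E F : Type*} [NormedAddCommGroup E] [InnerProductSpace ℝ E]
  [NormedAddCommGroup F] [InnerProductSpace ℝ F]

/-- the regular (Fréchet) normal cone to `A ⊆ E × F` at `a`. -/
def regNormalP (A : Set (E × F)) (a : E × F) : Set (E × F) :=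
  {v | ∀ ε : ℝ, 0 < ε → ∃ δ > 0, ∀ b ∈ A, ‖b - a‖ ≤ δ →
    ⟪v.1, b.1 - a.1⟫ + ⟪v.2, b.2 - a.2⟫ ≤ ε * ‖b - a‖}

/-- the limiting (Mordukhovich) normal cone to `A ⊆ E × F` at `a`. -/
def limNormalP (A : Set (E × F)) (a : E × F) : Set (E × F) :=
  {v | ∃ (b : ℕ → E × F) (w : ℕ → E × F), (∀ k, b k ∈ A) ∧
    (∀ k, w k ∈ regNormalP A (b k)) ∧ Tendsto b atTop (𝓝 a) ∧ Tendsto w atTop (𝓝 v)}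

/-- the limiting coderivative of `S` at `x` for `u`:
`xs ∈ coderiv S x u us ↔ (xs, -us) ∈ N_{graph S}(x, u)`. -/
def coderiv (S : E → Set F) (x : E) (u : F) (us : F) : Set E :=
  {xs | (xs, -us) ∈ limNormalP (svGraph S univ) (x, u)}

/-- the projectional coderivative of `S` at `x₀` for `u₀` with respect to `X`. -/
def projCoderiv (S : E → Set F) (X : Set E) (x₀ : E) (u₀ : F) (us : F) : Set E :=
  {xs | ∃ (x : ℕ → E) (u : ℕ → F) (xv : ℕ → E) (uv : ℕ → F) (y : ℕ → E),
    (∀ k, (x k, u k) ∈ svGraph S X) ∧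
    (∀ k, (xv k, -(uv k)) ∈ limNormalP (svGraph S X) (x k, u k)) ∧
    (∀ k, y k ∈ projSet (tangCone X (x k)) (xv k)) ∧
    Tendsto x atTop (𝓝 x₀) ∧ Tendsto u atTop (𝓝 u₀) ∧
    Tendsto uv atTop (𝓝 us) ∧ Tendsto y atTop (𝓝 xs)}

/-- the regular (Fréchet) subdifferential of an extended-real-valued function. -/
def regSubdiff (g : E → EReal) (x : E) : Set E :=
  {v | ∀ ε : ℝ, 0 < ε → ∃ δ > 0, ∀ y, ‖y - x‖ ≤ δ →
    g x + ((⟪v, y - x⟫ - ε * ‖y - x‖ : ℝ) : EReal) ≤ g y}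

/-- the limiting (Mordukhovich) subdifferential. -/
def limSubdiff (g : E → EReal) (x : E) : Set E :=
  {v | ∃ (xk vk : ℕ → E), Tendsto xk atTop (𝓝 x) ∧
    Tendsto (fun k => g (xk k)) atTop (𝓝 (g x)) ∧
    (∀ k, vk k ∈ regSubdiff g (xk k)) ∧ Tendsto vk atTop (𝓝 v)}

/-- the horizon (singular) subdifferential. -/
def horizonSubdiff (g : E → EReal) (x : E) : Set E :=
  {v | ∃ (xk vk : ℕ → E) (lk : ℕ → ℝ), Tendsto xk atTop (𝓝 x) ∧
    Tendsto (fun k => g (xk k)) atTop (𝓝 (g x)) ∧ (∀ k, 0 < lk k) ∧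
    Tendsto lk atTop (𝓝 0) ∧ (∀ k, vk k ∈ regSubdiff g (xk k)) ∧
    Tendsto (fun k => lk k • vk k) atTop (𝓝 v)}

/-- the outer limiting subdifferential of `g` at `xb` with respect to `vb`. -/
def outerSubdiffWrt (g : E → EReal) (xb vb : E) : Set E :=
  {v | ∃ (xk vk : ℕ → E), Tendsto xk atTop (𝓝 xb) ∧
    Tendsto (fun k => g (xk k)) atTop (𝓝 (g xb)) ∧
    (∀ k, g xb + ((⟪vb, xk k - xb⟫ : ℝ) : EReal) < g (xk k)) ∧
    (∀ k, vk k ∈ limSubdiff g (xk k)) ∧ Tendsto vk atTop (𝓝 v)}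

/-- `D` is a convex polyhedron (finite intersection of closed half-spaces). -/
def IsPolyhedral (D : Set E) : Prop :=
  ∃ s : Finset (E × ℝ), D = {v | ∀ p ∈ s, ⟪p.1, v⟫ ≤ p.2}

/-- the support function of `D`. -/
def supportFn (D : Set E) : E → EReal :=
  fun x => sSup ((fun v => ((⟪v, x⟫ : ℝ) : EReal)) '' D)

end InnerDefs

/-- Theorem 3.2 (i): if `f` is locally Lipschitz continuous at `x̄`
relative to a closed convex set `X ⊆ dom f`, then for all `x ∈ X` close enough to `x̄`,
the horizon subdifferential of `f + δ_X` at `x` is contained in the normal cone to `X`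
at `x`. -/
theorem horizonSubdiff_subset_normalCone {n : ℕ} (f : Eu n → EReal) (X : Set (Eu n))
    (xb : Eu n) (r : ℝ) (hfin : f xb = (r : EReal))
    (hlsc : LocallyClosedAt {p : Eu n × ℝ | f p.1 ≤ (p.2 : EReal)} (xb, r))
    (hX : IsClosed X) (hXconv : Convex ℝ X) (hXdom : X ⊆ {x | f x < ⊤}) (hxb : xb ∈ X)
    (hlip : RelLipschitzAt f X xb) :
    ∀ᶠ x in 𝓝 xb, x ∈ X →
      horizonSubdiff (fun y => if y ∈ X then f y else ⊤) x ⊆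
        {v : Eu n | ∀ y ∈ X, ⟪v, y - x⟫ ≤ 0} := by
  classical
  obtain ⟨κ, hκ0, V, hV, hlipV⟩ := hlip
  obtain ⟨δ0, hδ0, hballV⟩ := Metric.mem_nhds_iff.mp hV
  set g : Eu n → EReal := fun y => if y ∈ X then f y else ⊤ with hg
  have hfin' : ∀ z ∈ X, z ∈ Metric.ball xb δ0 → ∃ a : ℝ, f z = (a : EReal) := by
    intro z hzX hzB
    have h := hlipV z ⟨hzX, hballV hzB⟩ xb ⟨hxb, hballV (Metric.mem_ball_self hδ0)⟩
    rw [hfin] at h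
    simp only [eabsdiff] at h
    obtain ⟨h1, h2⟩ := max_le_iff.mp h
    refine ⟨(f z).toReal, (EReal.coe_toReal ?_ ?_).symm⟩
    · intro ht; rw [ht, EReal.top_sub_coe] at h1
      exact (EReal.coe_lt_top _).not_ge h1
    · intro hb; rw [hb, EReal.coe_sub_bot] at h2
      exact (EReal.coe_lt_top _).not_ge h2
  have hlipR : ∀ z ∈ X, z ∈ Metric.ball xb δ0 → ∀ w ∈ X, w ∈ Metric.ball xb δ0 →
      ∀ a b : ℝ, f z = (a : EReal) → f w = (b : EReal) → b - a ≤ κ * ‖w - z‖ := by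
    intro z hzX hzB w hwX hwB a b ha hb
    have h := hlipV z ⟨hzX, hballV hzB⟩ w ⟨hwX, hballV hwB⟩
    rw [ha, hb] at h
    simp only [eabsdiff] at h
    have h2 := le_trans (le_max_right _ _) h
    rw [← EReal.coe_sub, EReal.coe_le_coe_iff] at h2
    rwa [norm_sub_rev] at h2
  filter_upwards [Metric.ball_mem_nhds xb (half_pos hδ0)] with x hxB hxX v hv
  have hxB0 : x ∈ Metric.ball xb δ0 := Metric.ball_subset_ball (by linarith) hxB
  obtain ⟨a, ha⟩ := hfin' x hxX hxB0
  obtain ⟨xk, vk, lk, hxk, hgk, hlkpos, hlk0, hvk, hlkvk⟩ := hv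
  have hgx : g x = (a : EReal) := by simp [hg, hxX, ha]
  have hevB : ∀ᶠ k in atTop, xk k ∈ Metric.ball xb δ0 :=
    hxk (Metric.isOpen_ball.mem_nhds hxB0)
  have hevX : ∀ᶠ k in atTop, xk k ∈ X := by
    have hlt : ∀ᶠ k in atTop, g (xk k) < (⊤ : EReal) := by
      rw [hgx] at hgk
      exact hgk (isOpen_Iio.mem_nhds (EReal.coe_lt_top a))
    filter_upwards [hlt] with k hk
    by_contra h
    simp [hg, h] at hk
  intro y hy
  have key : ∀ᶠ k in atTop,
      ⟪lk k • vk k, y - xk k⟫ ≤ lk k * ((κ + 1) * ‖y - xk k‖) := by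
    filter_upwards [hevB, hevX] with k hkB hkX
    obtain ⟨ak, hak⟩ := hfin' (xk k) hkX hkB
    have hbound : ⟪vk k, y - xk k⟫ ≤ (κ + 1) * ‖y - xk k‖ := by
      rcases eq_or_ne y (xk k) with hyx | hyx
      · simp [hyx]
      · have hs : 0 < ‖y - xk k‖ := by
          rw [norm_pos_iff]; exact sub_ne_zero.mpr hyx
        obtain ⟨δk, hδk, hδkh⟩ := hvk k 1 one_pos
        set s := ‖y - xk k‖ with hsdef
        have hd : 0 < δ0 - ‖xk k - xb‖ := by
          have := mem_ball_iff_norm.mp hkB; linarith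
        set t := min 1 (min (δk / s) ((δ0 - ‖xk k - xb‖) / (2 * s))) with ht
        have ht0 : 0 < t :=
          lt_min one_pos (lt_min (div_pos hδk hs) (div_pos hd (by linarith)))
        have ht1 : t ≤ 1 := min_le_left _ _
        set z := xk k + t • (y - xk k) with hz
        have hzX : z ∈ X := hXconv.add_smul_sub_mem hkX hy ⟨le_of_lt ht0, ht1⟩
        have hnz : ‖z - xk k‖ = t * s := by
          rw [hz]; simp [norm_smul, abs_of_pos ht0]; exact Or.inl hsdef.symm
        have hts : t * s ≤ δk := by
          have h1 : t ≤ δk / s := le_trans (min_le_right _ _) (min_le_left _ _)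
          calc t * s ≤ (δk / s) * s := by nlinarith
            _ = δk := by field_simp
        have hzB : z ∈ Metric.ball xb δ0 := by
          rw [mem_ball_iff_norm]
          have heq : z - xb = (xk k - xb) + t • (y - xk k) := by rw [hz]; abel
          have h1 : ‖z - xb‖ ≤ ‖xk k - xb‖ + t * s := by
            rw [heq]
            refine le_trans (norm_add_le _ _) ?_
            simp [norm_smul, abs_of_pos ht0]; rw [hsdef]
          have h2 : t * s ≤ (δ0 - ‖xk k - xb‖) / 2 := by
            have h3 : t ≤ (δ0 - ‖xk k - xb‖) / (2 * s) :=
              le_trans (min_le_right _ _) (min_le_right _ _)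
            calc t * s ≤ ((δ0 - ‖xk k - xb‖) / (2 * s)) * s := by nlinarith
              _ = (δ0 - ‖xk k - xb‖) / 2 := by field_simp
          linarith
        obtain ⟨b, hb⟩ := hfin' z hzX hzB
        have hineq := hδkh z (by rw [hnz]; exact hts)
        have hgz : g z = (b : EReal) := by simp [hg, hzX, hb]
        have hgxk : g (xk k) = (ak : EReal) := by simp [hg, hkX, hak]
        rw [hgxk, hgz, ← EReal.coe_add, EReal.coe_le_coe_iff] at hineq
        have hlip2 := hlipR (xk k) hkX hkB z hzX hzB ak b hak hb
        have hinner : ⟪vk k, z - xk k⟫ = t * ⟪vk k, y - xk k⟫ := by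
          rw [show z - xk k = t • (y - xk k) from by rw [hz]; abel,
            real_inner_smul_right]
        rw [hinner, hnz] at hineq
        rw [hnz] at hlip2
        nlinarith [hineq, hlip2]
    rw [real_inner_smul_left]
    exact mul_le_mul_of_nonneg_left hbound (le_of_lt (hlkpos k))
  have hL : Tendsto (fun k => ⟪lk k • vk k, y - xk k⟫) atTop (𝓝 ⟪v, y - x⟫) :=
    hlkvk.inner (tendsto_const_nhds.sub hxk)
  have hR : Tendsto (fun k => lk k * ((κ + 1) * ‖y - xk k‖)) atTop (𝓝 0) := by
    have : Tendsto (fun k => lk k * ((κ + 1) * ‖y - xk k‖)) atTop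
        (𝓝 (0 * ((κ + 1) * ‖y - x‖))) :=
      hlk0.mul (((tendsto_const_nhds.sub hxk).norm).const_mul _)
    simpa using this
  exact le_of_tendsto_of_tendsto hL hR key
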